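/- Let ω : [0,1) → [0,∞) be any weight and let f(z) = Σ a_n z^n be analytic on 𝔻 with |a_0| + sup_{|z|<1} ω(|z|)|f'(z)| ≤ 1. Then the function g(z) = Σ |a_n| (z/√2)^n satisfies |g(0)| + sup_{|z|<1} ω(|z|)|g'(z)| ≤ 1. -/

import Mathlib

open Metric Complex intervalIntegral Real MeasureTheory FormalMultilinearSeries

lemma orth_int (d : ℤ) :
    (∫ θ in (0:ℝ)..(2*Real.pi), Complex.exp (d * θ * Complex.I)) =
      if d = 0 then (2*Real.pi : ℂ) else 0 := by
  rcases eq_or_ne d 0 with h | h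
  · simp [h]
  · rw [if_neg h]
    have hc : (d : ℂ) * Complex.I ≠ 0 := by
      simp [Complex.I_ne_zero, Int.cast_eq_zero, h]
    have := integral_exp_mul_complex (a := 0) (b := 2*Real.pi) hc
    simp_rw [show ∀ θ:ℝ, (d:ℂ) * θ * Complex.I = (d:ℂ)*Complex.I*θ by intro θ; ring]
    rw [this]
    have h1 : Complex.exp ((d:ℂ)*Complex.I*(2*Real.pi)) = 1 := by
      rw [show (d:ℂ)*Complex.I*(2*Real.pi) = (d:ℂ)*(2*Real.pi*Complex.I) by push_cast; ring]
      exact Complex.exp_int_mul_two_pi_mul_I d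
    simp [h1]

lemma orth_pow (m k : ℕ) :
    (∫ θ in (0:ℝ)..(2*Real.pi),
        Complex.exp (θ * Complex.I) ^ m * (starRingEnd ℂ) (Complex.exp (θ * Complex.I) ^ k)) =
      if m = k then (2*Real.pi : ℂ) else 0 := by
  have key : ∀ θ : ℝ, Complex.exp (θ * Complex.I) ^ m *
      (starRingEnd ℂ) (Complex.exp (θ * Complex.I) ^ k) =
      Complex.exp ((((m:ℤ) - (k:ℤ) : ℤ) : ℂ) * θ * Complex.I) := by
    intro θ
    rw [map_pow, ← Complex.exp_conj, ← Complex.exp_nat_mul, ← Complex.exp_nat_mul,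
      ← Complex.exp_add]
    congr 1
    have : (starRingEnd ℂ) ((θ:ℂ) * Complex.I) = -(θ * Complex.I) := by
      simp [Complex.conj_ofReal]
    rw [this]
    push_cast
    ring
  simp_rw [key]
  rw [orth_int ((m:ℤ) - (k:ℤ))]
  simp [sub_eq_zero]

lemma finite_parseval (β : ℕ → ℂ) (hβ : Summable fun m => ‖β m‖) (u : ℝ → ℂ)
    (hu : ∀ θ : ℝ, HasSum (fun m : ℕ => β m * Complex.exp (θ * Complex.I) ^ m) (u θ))
    {M : ℝ} (hM : ∀ θ, ‖u θ‖ ≤ M) (s : Finset ℕ) :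
    ∑ m ∈ s, ‖β m‖^2 ≤ M^2 := by
  have hπ : (0:ℝ) < 2*Real.pi := by positivity
  set e : ℕ → ℝ → ℂ := fun m θ => Complex.exp (θ * Complex.I) ^ m with he
  have hec : ∀ m, Continuous (e m) := by
    intro m; exact (Complex.continuous_exp.comp (by continuity)).pow m
  have hen : ∀ m θ, ‖e m θ‖ = 1 := by
    intro m θ; simp [he, Complex.norm_exp]
  set P : ℝ → ℂ := fun θ => ∑ k ∈ s, β k * e k θ with hP
  have hPc : Continuous P := by
    apply continuous_finset_sum; intro k _; exact continuous_const.mul (hec k)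
  have huc : Continuous u := by
    have : Continuous fun θ => ∑' m, β m * e m θ := by
      apply continuous_tsum (fun m => continuous_const.mul (hec m)) hβ
      intro m θ; rw [Pi.mul_apply, norm_mul, hen]; simp
    have hue : u = fun θ => ∑' m, β m * e m θ := by
      funext θ; exact ((hu θ).tsum_eq).symm
    rwa [hue]
  set μ : Measure ℝ := volume.restrict (Set.Ioc 0 (2*Real.pi)) with hμ
  have hμuniv : μ Set.univ = ENNReal.ofReal (2*Real.pi) := by
    simp [hμ, Real.volume_Ioc]
  have hint : ∀ {g : ℝ → ℂ}, Continuous g → Integrable g μ := by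
    intro g hg; exact (hg.integrableOn_Ioc)
  have hintR : ∀ {g : ℝ → ℝ}, Continuous g → Integrable g μ := by
    intro g hg; exact (hg.integrableOn_Ioc)
  set Q : ℝ := ∑ m ∈ s, ‖β m‖^2 with hQ
  -- value of complex pairing integrals per coefficient
  have key : ∀ m : ℕ, (∫ θ in (0:ℝ)..(2*Real.pi), β m * e m θ * (starRingEnd ℂ) (P θ)) =
      if m ∈ s then β m * (starRingEnd ℂ) (β m) * (2*Real.pi) else 0 := by
    intro m
    have expand : ∀ θ : ℝ, β m * e m θ * (starRingEnd ℂ) (P θ) =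
        ∑ k ∈ s, β m * (starRingEnd ℂ) (β k) * (e m θ * (starRingEnd ℂ) (e k θ)) := by
      intro θ
      rw [hP, map_sum, Finset.mul_sum]
      congr 1; funext k; rw [map_mul]; ring
    simp_rw [expand]
    rw [intervalIntegral.integral_finset_sum]
    · have : ∀ k ∈ s, (∫ θ in (0:ℝ)..(2*Real.pi),
          β m * (starRingEnd ℂ) (β k) * (e m θ * (starRingEnd ℂ) (e k θ))) =
          if m = k then β m * (starRingEnd ℂ) (β k) * (2*Real.pi) else 0 := by
        intro k _
        rw [intervalIntegral.integral_const_mul, orth_pow m k]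
        split <;> simp
      rw [Finset.sum_congr rfl this, Finset.sum_ite_eq s m
        (fun k => β m * (starRingEnd ℂ) (β k) * (2*Real.pi))]
    · intro k _
      exact (continuous_const.mul ((hec m).mul (Complex.continuous_conj.comp (hec k)))).intervalIntegrable _ _
  -- the complex pairing ∫ u conj P
  have hpair : (∫ θ, u θ * (starRingEnd ℂ) (P θ) ∂μ) = ((Q * (2*Real.pi) : ℝ) : ℂ) := by
    have hsum : HasSum (fun m => ∫ θ, β m * e m θ * (starRingEnd ℂ) (P θ) ∂μ)
        (∫ θ, (∑' m, β m * e m θ * (starRingEnd ℂ) (P θ)) ∂μ) := by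
      apply MeasureTheory.hasSum_integral_of_summable_integral_norm
      · intro m
        exact hint ((continuous_const.mul (hec m)).mul (Complex.continuous_conj.comp hPc))
      · have CP : ∀ θ, ‖(starRingEnd ℂ) (P θ)‖ ≤ ∑ k ∈ s, ‖β k‖ := by
          intro θ
          rw [RCLike.norm_conj]
          refine (norm_sum_le _ _).trans ?_
          apply Finset.sum_le_sum; intro k _; rw [norm_mul, hen]; simp
        apply Summable.of_nonneg_of_le (fun m => integral_nonneg (fun θ => norm_nonneg _))
          (fun m => ?_) (hβ.mul_right ((∑ k ∈ s, ‖β k‖) * (2*Real.pi)))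
        have : ∀ θ, ‖β m * e m θ * (starRingEnd ℂ) (P θ)‖ ≤ ‖β m‖ * (∑ k ∈ s, ‖β k‖) := by
          intro θ
          rw [norm_mul, norm_mul, hen, mul_one]
          exact mul_le_mul_of_nonneg_left (CP θ) (norm_nonneg _)
        calc ∫ θ, ‖β m * e m θ * (starRingEnd ℂ) (P θ)‖ ∂μ
            ≤ ∫ _θ, ‖β m‖ * (∑ k ∈ s, ‖β k‖) ∂μ := by
              apply integral_mono_of_nonneg (Filter.Eventually.of_forall fun θ => norm_nonneg _)
                (integrable_const _) (Filter.Eventually.of_forall this)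
          _ = ‖β m‖ * ((∑ k ∈ s, ‖β k‖) * (2*Real.pi)) := by
              rw [MeasureTheory.integral_const, measureReal_def, hμuniv, smul_eq_mul, ENNReal.toReal_ofReal hπ.le]; ring
    have hptw : ∀ θ, (∑' m, β m * e m θ * (starRingEnd ℂ) (P θ)) = u θ * (starRingEnd ℂ) (P θ) := by
      intro θ
      exact (((hu θ).mul_right ((starRingEnd ℂ) (P θ))).tsum_eq)
    simp_rw [hptw] at hsum
    have hval : ∀ m, (∫ θ, β m * e m θ * (starRingEnd ℂ) (P θ) ∂μ) =
        if m ∈ s then β m * (starRingEnd ℂ) (β m) * (2*Real.pi) else 0 := by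
      intro m
      rw [hμ, ← intervalIntegral.integral_of_le hπ.le]
      exact key m
    simp_rw [hval] at hsum
    have hsum2 : HasSum (fun m => if m ∈ s then β m * (starRingEnd ℂ) (β m) * (2*Real.pi) else 0)
        (∑ m ∈ s, β m * (starRingEnd ℂ) (β m) * (2*Real.pi)) := by
      have h0 := hasSum_sum_of_ne_finset_zero (s := s) (L := SummationFilter.unconditional ℕ)
        (f := fun m => if m ∈ s then β m * (starRingEnd ℂ) (β m) * (2*Real.pi) else 0)
        (fun m hm => if_neg hm)
      convert h0 using 1
      exact Finset.sum_congr rfl fun m hm => (if_pos hm).symm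
    rw [hsum.unique hsum2]
    have : ∀ m ∈ s, β m * (starRingEnd ℂ) (β m) * (2*Real.pi : ℂ) = ((‖β m‖^2 * (2*Real.pi) : ℝ) : ℂ) := by
      intro m _
      rw [Complex.mul_conj]
      rw [Complex.normSq_eq_norm_sq]
      push_cast
      rfl
    rw [Finset.sum_congr rfl this, hQ]
    push_cast
    rw [Finset.sum_mul]
  -- ∫ P conj P
  have hI2 : (∫ θ, P θ * (starRingEnd ℂ) (P θ) ∂μ) = ((Q * (2*Real.pi) : ℝ) : ℂ) := by
    have hexp2 : ∀ θ, P θ * (starRingEnd ℂ) (P θ) =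
        ∑ k ∈ s, β k * e k θ * (starRingEnd ℂ) (P θ) := by
      intro θ; rw [hP]; rw [Finset.sum_mul]
    simp_rw [hexp2]
    have hfs := MeasureTheory.integral_finset_sum (μ := μ) s
      (f := fun k θ => β k * e k θ * (starRingEnd ℂ) (P θ)) (fun k _ =>
      hint ((continuous_const.mul (hec k)).mul (Complex.continuous_conj.comp hPc)))
    rw [hfs]
    have hval : ∀ k ∈ s, (∫ θ, β k * e k θ * (starRingEnd ℂ) (P θ) ∂μ) =
        β k * (starRingEnd ℂ) (β k) * (2*Real.pi) := by
      intro k hk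
      rw [hμ, ← intervalIntegral.integral_of_le hπ.le, key k, if_pos hk]
    rw [Finset.sum_congr rfl hval]
    have : ∀ m ∈ s, β m * (starRingEnd ℂ) (β m) * (2*Real.pi : ℂ) = ((‖β m‖^2 * (2*Real.pi) : ℝ) : ℂ) := by
      intro m _
      rw [Complex.mul_conj, Complex.normSq_eq_norm_sq]
      push_cast
      rfl
    rw [Finset.sum_congr rfl this, hQ]
    push_cast
    rw [Finset.sum_mul]
  -- real parts
  have hre_pair : (∫ θ, (u θ * (starRingEnd ℂ) (P θ)).re ∂μ) = Q * (2*Real.pi) := by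
    have h1 := _root_.integral_re (f := fun θ => u θ * (starRingEnd ℂ) (P θ))
      (μ := μ) (hint (huc.mul (Complex.continuous_conj.comp hPc)))
    simp only [RCLike.re_to_complex] at h1
    rw [h1, hpair]
    simp
  have hre_P : (∫ θ, Complex.normSq (P θ) ∂μ) = Q * (2*Real.pi) := by
    have hptw : ∀ θ, Complex.normSq (P θ) = (P θ * (starRingEnd ℂ) (P θ)).re := by
      intro θ; rw [Complex.mul_conj]; simp
    simp_rw [hptw]
    have h1 := _root_.integral_re (f := fun θ => P θ * (starRingEnd ℂ) (P θ))
      (μ := μ) (hint (hPc.mul (Complex.continuous_conj.comp hPc)))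
    simp only [RCLike.re_to_complex] at h1
    rw [h1, hI2]
    simp
  -- bound on ∫ normSq u
  have hA : (∫ θ, Complex.normSq (u θ) ∂μ) ≤ M^2 * (2*Real.pi) := by
    have hb : ∀ θ, Complex.normSq (u θ) ≤ M^2 := by
      intro θ
      rw [← Complex.sq_norm]
      exact pow_le_pow_left₀ (norm_nonneg _) (hM θ) 2
    calc (∫ θ, Complex.normSq (u θ) ∂μ) ≤ ∫ _θ, M^2 ∂μ := by
          apply integral_mono_of_nonneg
            (Filter.Eventually.of_forall fun θ => Complex.normSq_nonneg _)
            (integrable_const _) (Filter.Eventually.of_forall hb)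
      _ = M^2 * (2*Real.pi) := by
          rw [MeasureTheory.integral_const, measureReal_def, hμuniv, smul_eq_mul, ENNReal.toReal_ofReal hπ.le]
          ring
  -- expansion of ∫ normSq (u - P)
  have hnn : (0:ℝ) ≤ ∫ θ, Complex.normSq (u θ - P θ) ∂μ :=
    integral_nonneg fun θ => Complex.normSq_nonneg _
  have hsplit : (∫ θ, Complex.normSq (u θ - P θ) ∂μ) =
      (∫ θ, Complex.normSq (u θ) ∂μ) + (∫ θ, Complex.normSq (P θ) ∂μ)
        - 2 * ∫ θ, (u θ * (starRingEnd ℂ) (P θ)).re ∂μ := by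
    have hexp : ∀ θ, Complex.normSq (u θ - P θ) =
        Complex.normSq (u θ) + Complex.normSq (P θ) - 2 * (u θ * (starRingEnd ℂ) (P θ)).re :=
      fun θ => Complex.normSq_sub _ _
    simp_rw [hexp]
    rw [MeasureTheory.integral_sub, MeasureTheory.integral_add, MeasureTheory.integral_const_mul]
    · exact hintR (Complex.continuous_normSq.comp huc)
    · exact hintR (Complex.continuous_normSq.comp hPc)
    · exact (hintR (Complex.continuous_normSq.comp huc)).add
        (hintR (Complex.continuous_normSq.comp hPc))
    · exact (hintR (Complex.continuous_re.comp (huc.mul (Complex.continuous_conj.comp hPc)))).const_mul 2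
  rw [hsplit, hre_pair, hre_P] at hnn
  have hQle : Q * (2*Real.pi) ≤ M^2 * (2*Real.pi) := by nlinarith [hA]
  have := le_of_mul_le_mul_right (by linarith : Q * (2*Real.pi) ≤ M^2 * (2*Real.pi)) hπ
  simpa [hQ] using this

lemma hasSum_deriv_ps (c : ℕ → ℂ)
    (hc : ∀ ρ : ℝ, 0 ≤ ρ → ρ < 1 → Summable fun n => ‖c n‖ * ρ^n)
    (z : ℂ) (hz : ‖z‖ < 1) :
    HasSum (fun m : ℕ => ((m:ℂ)+1) * c (m+1) * z^m)
      (deriv (fun w : ℂ => ∑' n : ℕ, c n * w^n) z) := by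
  set F : ℂ → ℂ := fun w => ∑' n : ℕ, c n * w^n with hFdef
  set p := FormalMultilinearSeries.ofScalars ℂ c with hp
  have hpn : ∀ n, ‖p n‖ = ‖c n‖ := fun n => ofScalars_norm ℂ c n
  have hrad : 1 ≤ p.radius := by
    apply ENNReal.le_of_forall_nnreal_lt
    intro ρ hρ
    apply p.le_radius_of_summable
    simp_rw [hpn]
    exact hc ρ ρ.coe_nonneg (by exact_mod_cast hρ)
  have hsum_at : ∀ y : ℂ, ‖y‖ < 1 → HasSum (fun n => c n * y^n) (F y) := by
    intro y hy
    have : Summable fun n => c n * y^n := by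
      apply Summable.of_norm
      simp_rw [norm_mul, norm_pow]
      exact hc ‖y‖ (norm_nonneg _) hy
    exact this.hasSum
  have hF : HasFPowerSeriesOnBall F p 0 1 := by
    refine ⟨hrad, one_pos, ?_⟩
    intro y hy
    have hy' : ‖y‖ < 1 := by
      have h := hy
      simp only [Metric.mem_eball, edist_zero_right] at h
      rw [← ofReal_norm, ENNReal.ofReal_lt_one] at h
      exact h
    have := hsum_at y hy'
    rw [zero_add]
    convert this using 1
    · rfl
    funext n
    rw [hp, ofScalars_apply_eq, smul_eq_mul]
  have hd := hF.fderiv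
  have hzball : z ∈ Metric.eball (0:ℂ) 1 := by
    rw [Metric.mem_eball, edist_zero_right, ← ofReal_norm, ENNReal.ofReal_lt_one]
    exact hz
  have hs := hd.hasSum (by simpa using hzball)
  rw [zero_add] at hs
  have hs2 := (ContinuousLinearMap.apply ℂ ℂ z).hasSum hs
  simp only [ContinuousLinearMap.apply_apply] at hs2
  have hterm : ∀ n : ℕ, (p.derivSeries n fun _ => z) z = ((n:ℂ)+1) * c (n+1) * z^(n+1) := by
    intro n
    rw [derivSeries_apply_diag, hp, ofScalars_apply_eq, nsmul_eq_mul, smul_eq_mul]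
    push_cast
    ring
  simp_rw [hterm] at hs2
  have hfd : fderiv ℂ F z z = z * deriv F z := by
    rw [← fderiv_apply_one_eq_deriv]
    have : z = z • (1:ℂ) := by simp
    calc fderiv ℂ F z z = fderiv ℂ F z (z • (1:ℂ)) := by rw [← this]
      _ = z • (fderiv ℂ F z (1:ℂ)) := by rw [_root_.map_smul]
      _ = z * fderiv ℂ F z 1 := by rw [smul_eq_mul]
  rw [hfd] at hs2
  rcases eq_or_ne z 0 with rfl | hz0
  · have hder : deriv F 0 = c 1 := by
      have := hF.hasFPowerSeriesAt.deriv
      rw [this, hp]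
      show (ofScalars ℂ c 1) (fun _ => (1:ℂ)) = c 1
      rw [ofScalars_apply_eq]
      simp
    rw [hder]
    have h0 := hasSum_single (f := fun m : ℕ => ((m:ℂ)+1) * c (m+1) * (0:ℂ)^m) 0
      (fun m hm => by simp [zero_pow hm])
    simpa using h0
  · have heq : (fun m : ℕ => z * (((m:ℂ)+1) * c (m+1) * z^m)) =
        fun m : ℕ => ((m:ℂ)+1) * c (m+1) * z^(m+1) := by
      funext m; rw [pow_succ]; ring
    exact (hasSum_mul_left_iff hz0).mp (heq ▸ hs2)

theorem bohr_weighted_bloch (ω : ℝ → ℝ) (hω : ∀ r ∈ Set.Ico (0 : ℝ) 1, 0 ≤ ω r)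
    (f : ℂ → ℂ) (a : ℕ → ℂ)
    (hf : ∀ z ∈ ball (0 : ℂ) 1, HasSum (fun n : ℕ => a n * z ^ n) (f z))
    (hb : ∀ z ∈ ball (0 : ℂ) 1, ‖a 0‖ + ω ‖z‖ * ‖deriv f z‖ ≤ 1) :
    ∀ z ∈ ball (0 : ℂ) 1,
      ‖(fun w : ℂ => ∑' n : ℕ, (‖a n‖ : ℂ) * (w / Real.sqrt 2) ^ n) 0‖ +
        ω ‖z‖ * ‖deriv (fun w : ℂ => ∑' n : ℕ, (‖a n‖ : ℂ) * (w / Real.sqrt 2) ^ n) z‖ ≤ 1 := by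
  intro z hz
  have hz1 : ‖z‖ < 1 := by simpa [Metric.mem_ball, dist_zero_right] using hz
  have hr0 : (0:ℝ) ≤ ‖z‖ := norm_nonneg z
  -- summability of coefficients against geometric weights
  have hsa : ∀ ρ : ℝ, 0 ≤ ρ → ρ < 1 → Summable fun n => ‖a n‖ * ρ^n := by
    intro ρ h0 h1
    have hmem : (ρ:ℂ) ∈ ball (0:ℂ) 1 := by
      rw [Metric.mem_ball, dist_zero_right, Complex.norm_real, Real.norm_eq_abs,
        _root_.abs_of_nonneg h0]
      exact h1
    have hsumm : Summable fun n : ℕ => a n * (ρ:ℂ)^n := (hf _ hmem).summable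
    have := summable_norm_iff.mpr hsumm
    simpa [norm_mul, norm_pow, Complex.norm_real, Real.norm_eq_abs,
      _root_.abs_of_nonneg h0] using this
  -- rewrite the Bohr-transform function with clean coefficients
  set c' : ℕ → ℂ := fun n => (‖a n‖ : ℂ) / ((Real.sqrt 2 : ℝ) : ℂ)^n with hc'def
  have hfun : (fun w : ℂ => ∑' n : ℕ, (‖a n‖ : ℂ) * (w / Real.sqrt 2) ^ n)
      = fun w : ℂ => ∑' n : ℕ, c' n * w^n := by
    funext w
    congr 1
    funext n
    rw [hc'def, div_pow]
    ring
  rw [hfun]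
  have hs2 : (1:ℝ) ≤ Real.sqrt 2 := by
    rw [show (1:ℝ) = Real.sqrt 1 by simp]
    exact Real.sqrt_le_sqrt (by norm_num)
  have hs2' : (0:ℝ) < Real.sqrt 2 := by linarith
  have hc'norm : ∀ n, ‖c' n‖ = ‖a n‖ / (Real.sqrt 2)^n := by
    intro n
    rw [hc'def]
    simp [norm_div, norm_pow, Complex.norm_real, Real.norm_eq_abs, abs_norm,
      _root_.abs_of_nonneg hs2'.le]
  have hc' : ∀ ρ : ℝ, 0 ≤ ρ → ρ < 1 → Summable fun n => ‖c' n‖ * ρ^n := by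
    intro ρ h0 h1
    apply Summable.of_nonneg_of_le (fun n => by positivity) _ (hsa ρ h0 h1)
    intro n
    rw [hc'norm]
    apply mul_le_mul_of_nonneg_right _ (pow_nonneg h0 n)
    apply div_le_self (norm_nonneg _)
    exact one_le_pow₀ hs2
  -- value at 0
  have hg0 : ‖(fun w : ℂ => ∑' n : ℕ, c' n * w^n) (0:ℂ)‖ = ‖a 0‖ := by
    simp only
    rw [tsum_eq_single 0 (fun n hn => by simp [zero_pow hn])]
    simp [hc'def]
  -- the constant term bound
  have h0mem : (0:ℂ) ∈ ball (0:ℂ) 1 := by simp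
  have hω0 : 0 ≤ ω ‖(0:ℂ)‖ * ‖deriv f 0‖ := by
    apply mul_nonneg _ (norm_nonneg _)
    exact hω _ (by simp [Set.mem_Ico])
  have ha0 : ‖a 0‖ ≤ 1 := by
    have := hb 0 h0mem
    linarith
  -- main case split on ω ‖z‖
  have hωr : 0 ≤ ω ‖z‖ := hω _ ⟨hr0, hz1⟩
  rcases eq_or_lt_of_le hωr with hω0' | hωpos
  · rw [hg0, ← hω0']
    simpa using ha0
  -- positive weight case
  set M : ℝ := (1 - ‖a 0‖) / ω ‖z‖ with hM
  have hM0 : 0 ≤ M := div_nonneg (by linarith) hωr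
  -- F, the tsum version of f
  set F : ℂ → ℂ := fun w => ∑' n : ℕ, a n * w^n with hFdef
  have hderiv_eq : ∀ w ∈ ball (0:ℂ) 1, deriv f w = deriv F w := by
    intro w hw
    apply Filter.EventuallyEq.deriv_eq
    filter_upwards [isOpen_ball.mem_nhds hw] with x hx
    exact ((hf x hx).tsum_eq).symm
  have hMb : ∀ w : ℂ, ‖w‖ = ‖z‖ → ‖deriv F w‖ ≤ M := by
    intro w hw
    have hwmem : w ∈ ball (0:ℂ) 1 := by
      rw [Metric.mem_ball, dist_zero_right, hw]
      exact hz1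
    have h1 := hb w hwmem
    rw [hderiv_eq w hwmem, hw] at h1
    rw [hM, le_div_iff₀ hωpos]
    linarith [h1]
  -- the β sequence for Parseval
  set β : ℕ → ℂ := fun m => ((m:ℂ)+1) * a (m+1) * ((‖z‖ : ℝ) : ℂ)^m with hβdef
  have hβnorm : ∀ m, ‖β m‖ = ((m:ℝ)+1) * ‖a (m+1)‖ * ‖z‖^m := by
    intro m
    rw [hβdef]
    rw [norm_mul, norm_mul, norm_pow, Complex.norm_real, Real.norm_eq_abs, abs_norm]
    congr 2
    rw [show ((m:ℂ)+1) = ((m+1 : ℕ) : ℂ) by push_cast; ring, Complex.norm_natCast]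
    push_cast
    ring
  -- summability of ‖β‖
  have hβsum : Summable fun m => ‖β m‖ := by
    set ρ : ℝ := (‖z‖ + 1)/2 with hρdef
    have hρ0 : 0 < ρ := by rw [hρdef]; linarith
    have hρ1 : ρ < 1 := by rw [hρdef]; linarith
    have hrρ : ‖z‖ < ρ := by rw [hρdef]; linarith
    set T : ℝ := ∑' n, ‖a n‖ * ρ^n with hT
    have hTb : ∀ n, ‖a n‖ * ρ^n ≤ T :=
      fun n => Summable.le_tsum (hsa ρ hρ0.le hρ1) n (fun m _ => by positivity)
    have han : ∀ n, ‖a n‖ ≤ T / ρ^n := by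
      intro n
      rw [le_div_iff₀ (pow_pos hρ0 n)]
      exact hTb n
    set x : ℝ := ‖z‖ / ρ with hx
    have hx0 : 0 ≤ x := by positivity
    have hx1 : x < 1 := by rw [hx, div_lt_one hρ0]; exact hrρ
    have hgeo : Summable fun m : ℕ => ((m:ℝ)+1) * x^m := by
      have h1 : Summable fun m : ℕ => (m:ℝ) * x^m := by
        have := summable_pow_mul_geometric_of_norm_lt_one 1 (r := x)
          (by rwa [Real.norm_eq_abs, _root_.abs_of_nonneg hx0])
        simpa using this
      have h2 : Summable fun m : ℕ => x^m := summable_geometric_of_lt_one hx0 hx1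
      simpa [add_mul] using h1.add h2
    apply Summable.of_nonneg_of_le (fun m => norm_nonneg _) _ ((hgeo.mul_left (T/ρ)))
    intro m
    rw [hβnorm]
    have h1 : ((m:ℝ)+1) * ‖a (m+1)‖ * ‖z‖^m ≤ ((m:ℝ)+1) * (T / ρ^(m+1)) * ‖z‖^m := by
      apply mul_le_mul_of_nonneg_right _ (pow_nonneg hr0 m)
      exact mul_le_mul_of_nonneg_left (han (m+1)) (by positivity)
    refine h1.trans (le_of_eq ?_)
    rw [hx]
    have key : ∀ ρ' : ℝ, 0 < ρ' → ((m:ℝ)+1) * (T / ρ'^(m+1)) * ‖z‖^m = T/ρ' * (((m:ℝ)+1) * (‖z‖/ρ')^m) := by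
      intro ρ' h
      rw [div_pow, pow_succ]
      field_simp
    exact key ρ hρ0
  -- the boundary function u
  set u : ℝ → ℂ := fun θ => deriv F (((‖z‖ : ℝ) : ℂ) * Complex.exp (θ * Complex.I)) with hu_def
  have hu : ∀ θ : ℝ, HasSum (fun m : ℕ => β m * Complex.exp (θ * Complex.I) ^ m) (u θ) := by
    intro θ
    set w : ℂ := ((‖z‖ : ℝ) : ℂ) * Complex.exp (θ * Complex.I) with hw
    have hwn : ‖w‖ = ‖z‖ := by
      rw [hw, norm_mul, Complex.norm_real, Real.norm_eq_abs, _root_.abs_of_nonneg hr0]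
      simp [Complex.norm_exp]
    have := hasSum_deriv_ps a hsa w (by rw [hwn]; exact hz1)
    convert this using 1
    funext m
    rw [hβdef, hw, mul_pow]
    ring
  have hMu : ∀ θ, ‖u θ‖ ≤ M := by
    intro θ
    apply hMb
    rw [norm_mul, Complex.norm_real, Real.norm_eq_abs, _root_.abs_of_nonneg hr0]
    simp [Complex.norm_exp]
  have hpars := finite_parseval β hβsum u hu hMu
  -- deriv of the transformed series
  have hgd := hasSum_deriv_ps c' hc' z hz1
  -- norms of the deriv series terms
  set y : ℕ → ℝ := fun m => ((Real.sqrt 2)⁻¹)^(m+1) with hy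
  have hterm : ∀ m : ℕ, ‖((m:ℂ)+1) * c' (m+1) * z^m‖ = ‖β m‖ * y m := by
    intro m
    rw [norm_mul, norm_mul, hc'norm, hβnorm, hy]
    have hnm : ‖((m:ℂ)+1)‖ = ((m:ℝ)+1) := by
      rw [show ((m:ℂ)+1) = ((m+1 : ℕ) : ℂ) by push_cast; ring, Complex.norm_natCast]
      push_cast
      ring
    rw [hnm]
    rw [norm_pow, div_eq_mul_inv, ← inv_pow]
    ring
  have hsum_terms : Summable fun m : ℕ => ‖((m:ℂ)+1) * c' (m+1) * z^m‖ := by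
    simp_rw [hterm]
    apply Summable.of_nonneg_of_le (fun m => by positivity) _ hβsum
    intro m
    apply mul_le_of_le_one_right (norm_nonneg _)
    rw [hy]
    apply pow_le_one₀ (by positivity)
    rw [inv_le_one_iff₀]
    right; exact hs2
  -- bound the tsum via Cauchy-Schwarz + Parseval
  have hS : (∑' m, ‖β m‖ * y m) ≤ M := by
    apply Summable.tsum_le_of_sum_le (by simp_rw [← hterm]; exact hsum_terms)
    intro s
    have hy2 : ∀ m, (y m)^2 = (1/2)^(m+1) := by
      intro m
      rw [hy, ← pow_mul, mul_comm (m+1) 2, pow_mul]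
      congr 1
      rw [sq, ← mul_inv, Real.mul_self_sqrt (by norm_num : (0:ℝ) ≤ 2)]
      norm_num
    have hys : ∑ m ∈ s, (y m)^2 ≤ 1 := by
      simp_rw [hy2]
      have hsummy : Summable fun m : ℕ => ((1:ℝ)/2)^(m+1) :=
        ((summable_geometric_of_lt_one (r := (1:ℝ)/2) (by norm_num) (by norm_num)).mul_left
          ((1:ℝ)/2)).congr (fun m => by rw [pow_succ]; ring)
      refine (Summable.sum_le_tsum s (fun m _ => by positivity) hsummy).trans ?_
      have : ∑' m : ℕ, ((1:ℝ)/2)^(m+1) = 1 := by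
        have h := tsum_geometric_of_lt_one (r := (1:ℝ)/2) (by norm_num) (by norm_num)
        calc ∑' m : ℕ, ((1:ℝ)/2)^(m+1) = (1/2) * ∑' m : ℕ, ((1:ℝ)/2)^m := by
              rw [← tsum_mul_left]
              congr 1; funext m; rw [pow_succ]; ring
          _ = 1 := by rw [h]; norm_num
      rw [this]
    have hcs := Finset.sum_mul_sq_le_sq_mul_sq s (fun m => ‖β m‖) y
    have hsq : (∑ m ∈ s, ‖β m‖ * y m)^2 ≤ M^2 := by
      calc (∑ m ∈ s, ‖β m‖ * y m)^2 ≤ (∑ m ∈ s, ‖β m‖^2) * (∑ m ∈ s, (y m)^2) := hcs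
        _ ≤ M^2 * 1 := by
            apply mul_le_mul (hpars s) hys (Finset.sum_nonneg fun m _ => by positivity)
              (by positivity)
        _ = M^2 := by ring
    have hnn : 0 ≤ ∑ m ∈ s, ‖β m‖ * y m :=
      Finset.sum_nonneg fun m _ => mul_nonneg (norm_nonneg _) (by positivity)
    calc ∑ m ∈ s, ‖β m‖ * y m = Real.sqrt ((∑ m ∈ s, ‖β m‖ * y m)^2) :=
          (Real.sqrt_sq hnn).symm
      _ ≤ Real.sqrt (M^2) := Real.sqrt_le_sqrt hsq
      _ = M := Real.sqrt_sq hM0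
  -- finish
  have hgnorm : ‖deriv (fun w : ℂ => ∑' n : ℕ, c' n * w^n) z‖ ≤ M := by
    rw [← hgd.tsum_eq]
    refine (norm_tsum_le_tsum_norm hsum_terms).trans ?_
    rw [show (∑' m : ℕ, ‖((m:ℂ)+1) * c' (m+1) * z^m‖) = ∑' m : ℕ, ‖β m‖ * y m by
      congr 1; funext m; exact hterm m]
    exact hS
  have : ω ‖z‖ * ‖deriv (fun w : ℂ => ∑' n : ℕ, c' n * w^n) z‖ ≤ 1 - ‖a 0‖ := by
    calc ω ‖z‖ * ‖deriv (fun w : ℂ => ∑' n : ℕ, c' n * w^n) z‖ ≤ ω ‖z‖ * M :=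
          mul_le_mul_of_nonneg_left hgnorm hωr
      _ = 1 - ‖a 0‖ := by rw [hM, ← mul_div_assoc, mul_div_cancel_left₀ _ hωpos.ne']
  rw [hg0]
  linarith
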